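/- Let X_1, …, X_s be independent and identically distributed random variables on a probability space (Ω, F, P), each taking values in {1,…,n}, let c ∈ {1,…,n}, set p = P(X_1 = c), and let f be a natural number. Define W_j = 1 if #{i ≠ j : X_i = X_j} ≥ f and W_j = 0 otherwise, and let B(p) = ∑_{m=f}^{s-1} C(s−1, m) p^m (1 − p)^{s−1−m} denote the Binomial(s−1, p) upper-tail probability at f. Then for every j, p · B(p) ≤ P(W_j = 1) ≤ p · B(p) + (1 − p). -/

import Mathlib

open MeasureTheory ProbabilityTheory Finset
open scoped ENNReal

/-- If `X 1, …, X s` are i.i.d. with values in `Fin n`, `p = P(X = c)` for a fixed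
dimension `c`, `W j` is the indicator that `#{i ≠ j : X i = X j} ≥ f`, and
`B(p) = ∑_{m=f}^{s-1} C(s-1, m) p^m (1-p)^(s-1-m)` is the `Binomial (s-1, p)` upper-tail
probability at `f`, then `p · B(p) ≤ P(W j = 1) ≤ p · B(p) + (1 - p)` for every `j`. -/
theorem prob_indicator_agree_bounds
    {Ω : Type*} [MeasurableSpace Ω] (μ : Measure Ω) [IsProbabilityMeasure μ]
    (s n : ℕ) (X : Fin s → Ω → Fin n)
    (hmeas : ∀ j, Measurable (X j))
    (hindep : iIndepFun X μ)
    (hid : ∀ i j, IdentDistrib (X i) (X j) μ μ)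
    (c : Fin n) (p : ℝ≥0∞) (hp : ∀ j, μ {ω | X j ω = c} = p)
    (f : ℕ) (W : Fin s → Ω → ℕ)
    (hW : ∀ j ω, W j ω =
      if f ≤ (Finset.univ.filter fun i => i ≠ j ∧ X i ω = X j ω).card then 1 else 0) :
    ∀ j : Fin s,
      p * (∑ m ∈ Finset.Icc f (s - 1),
          ((s - 1).choose m : ℝ≥0∞) * p ^ m * (1 - p) ^ (s - 1 - m)) ≤
        μ {ω | W j ω = 1} ∧
      μ {ω | W j ω = 1} ≤
        p * (∑ m ∈ Finset.Icc f (s - 1),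
          ((s - 1).choose m : ℝ≥0∞) * p ^ m * (1 - p) ^ (s - 1 - m)) + (1 - p) := by
  classical
  intro j
  set A : Set Ω := {ω | X j ω = c} with hA
  have hAmeas : MeasurableSet A := by
    have h : A = X j ⁻¹' {c} := by ext ω; simp [hA]
    rw [h]; exact hmeas j (measurableSet_singleton c)
  have hApr : μ A = p := hp j
  set S : Finset (Fin s) := Finset.univ.erase j with hSdef
  have hScard : S.card = s - 1 := by
    rw [hSdef, Finset.card_erase_of_mem (Finset.mem_univ j), Finset.card_univ, Fintype.card_fin]
  set g : Ω → Finset (Fin s) := fun ω => Finset.univ.filter fun i => i ≠ j ∧ X i ω = c with hgdef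
  have hgS : ∀ ω, g ω ⊆ S := by
    intro ω i hi
    simp only [hgdef, Finset.mem_filter] at hi
    exact Finset.mem_erase.2 ⟨hi.2.1, Finset.mem_univ i⟩
  have hjS : j ∉ S := by simp [hSdef]
  have hpc : ∀ i : Fin s, μ (X i ⁻¹' {c}) = p := by
    intro i
    have h : X i ⁻¹' {c} = {ω | X i ω = c} := by ext ω; simp
    rw [h, hp i]
  have hpcc : ∀ i : Fin s, μ ((X i ⁻¹' {c})ᶜ) = 1 - p := by
    intro i
    rw [prob_compl_eq_one_sub (hmeas i (measurableSet_singleton c)), hpc i]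
  -- per-pattern events
  have key : ∀ T ∈ S.powerset,
      MeasurableSet (A ∩ {ω | g ω = T}) ∧
      μ (A ∩ {ω | g ω = T}) = p * (p ^ T.card * (1 - p) ^ (S.card - T.card)) := by
    intro T hT
    rw [Finset.mem_powerset] at hT
    set sets : Fin s → Set (Fin n) := fun i =>
      if i = j then {c} else if i ∈ T then {c} else {c}ᶜ with hsets
    have hsets_meas : ∀ i, MeasurableSet (sets i) := by
      intro i
      by_cases h1 : i = j <;> by_cases h2 : i ∈ T <;>
        simp [hsets, h1, h2, measurableSet_singleton,
          MeasurableSet.compl (measurableSet_singleton c)]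
    have hEq : A ∩ {ω | g ω = T} = ⋂ i ∈ Finset.univ, X i ⁻¹' sets i := by
      ext ω
      simp only [Set.mem_inter_iff, Set.mem_setOf_eq, hA, Set.mem_iInter, Set.mem_preimage,
        Finset.mem_univ, forall_true_left, true_implies]
      constructor
      · rintro ⟨hj, hT'⟩ i
        by_cases h1 : i = j
        · subst h1; simp [hsets, hj]
        · by_cases h2 : i ∈ T
          · have : i ∈ g ω := hT' ▸ h2
            simp only [hgdef, Finset.mem_filter] at this
            simp [hsets, h1, h2, this.2.2]
          · simp only [hsets, if_neg h1, if_neg h2, Set.mem_compl_iff, Set.mem_singleton_iff]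
            intro hc
            exact h2 (hT' ▸ (by simp [hgdef, h1, hc] : i ∈ g ω))
      · intro h
        have hj : X j ω = c := by
          have := h j; simpa [hsets] using this
        refine ⟨hj, ?_⟩
        ext i
        simp only [hgdef, Finset.mem_filter, Finset.mem_univ, true_and]
        by_cases h1 : i = j
        · subst h1
          simp only [ne_eq, not_true_eq_false, false_and]
          exact (iff_of_false (by simp) (fun hc => hjS (hT hc)))
        · have hi := h i
          by_cases h2 : i ∈ T
          · simp only [hsets, if_neg h1, if_pos h2, Set.mem_singleton_iff] at hi
            simp [h1, h2, hi]
          · simp only [hsets, if_neg h1, if_neg h2, Set.mem_compl_iff,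
              Set.mem_singleton_iff] at hi
            simp [h1, h2, hi]
    have hMeas : MeasurableSet (A ∩ {ω | g ω = T}) := by
      rw [hEq]
      exact Finset.measurableSet_biInter _ fun i _ => hmeas i (hsets_meas i)
    refine ⟨hMeas, ?_⟩
    rw [hEq, hindep.measure_inter_preimage_eq_mul Finset.univ (fun i _ => hsets_meas i)]
    rw [← Finset.mul_prod_erase Finset.univ _ (Finset.mem_univ j), ← hSdef]
    have h1 : μ (X j ⁻¹' sets j) = p := by
      simp only [hsets, if_pos rfl]; exact hpc j
    rw [h1]
    congr 1
    have h2 : ∀ i ∈ S, μ (X i ⁻¹' sets i) = if i ∈ T then p else 1 - p := by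
      intro i hi
      have hij : i ≠ j := (Finset.mem_erase.1 (hSdef ▸ hi)).1
      by_cases h2 : i ∈ T <;> simp [hsets, hij, h2, hpc i, hpcc i, Set.preimage_compl]
    rw [Finset.prod_congr rfl h2, ← Finset.prod_sdiff hT]
    rw [Finset.prod_congr rfl (fun i hi => if_neg (Finset.mem_sdiff.1 hi).2),
      Finset.prod_congr rfl (fun i (hi : i ∈ T) => if_pos hi),
      Finset.prod_const, Finset.prod_const, Finset.card_sdiff_of_subset hT, mul_comm]
  -- per-count events
  have hdisj : ∀ m : ℕ, (↑(S.powersetCard m) : Set (Finset (Fin s))).PairwiseDisjoint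
      (fun T => A ∩ {ω | g ω = T}) := by
    intro m T _ T' _ hne
    refine Set.disjoint_left.2 fun ω h1 h2 => hne ?_
    exact h1.2.symm.trans h2.2
  have hunion1 : ∀ m : ℕ, A ∩ {ω | (g ω).card = m} =
      ⋃ T ∈ S.powersetCard m, (A ∩ {ω | g ω = T}) := by
    intro m; ext ω
    simp only [Set.mem_inter_iff, Set.mem_setOf_eq, Set.mem_iUnion, exists_prop]
    constructor
    · rintro ⟨hω, hc⟩
      exact ⟨g ω, Finset.mem_powersetCard.2 ⟨hgS ω, hc⟩, hω, rfl⟩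
    · rintro ⟨T, hT, hω, hgT⟩
      exact ⟨hω, by rw [hgT]; exact (Finset.mem_powersetCard.1 hT).2⟩
  have hmeasm : ∀ m : ℕ, MeasurableSet (A ∩ {ω | (g ω).card = m}) := by
    intro m
    rw [hunion1 m]
    exact (S.powersetCard m).measurableSet_biUnion
      fun T hT => (key T (Finset.mem_powerset.2 (Finset.mem_powersetCard.1 hT).1)).1
  have hmum : ∀ m : ℕ, μ (A ∩ {ω | (g ω).card = m})
      = (S.card.choose m : ℝ≥0∞) * (p * (p ^ m * (1 - p) ^ (S.card - m))) := by
    intro m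
    rw [hunion1 m, measure_biUnion_finset (hdisj m)
      (fun T hT => (key T (Finset.mem_powerset.2 (Finset.mem_powersetCard.1 hT).1)).1)]
    have h : ∀ T ∈ S.powersetCard m,
        μ (A ∩ {ω | g ω = T}) = p * (p ^ m * (1 - p) ^ (S.card - m)) := by
      intro T hT
      obtain ⟨hsub, hcard⟩ := Finset.mem_powersetCard.1 hT
      rw [(key T (Finset.mem_powerset.2 hsub)).2, hcard]
    rw [Finset.sum_congr rfl h, Finset.sum_const, Finset.card_powersetCard, nsmul_eq_mul]
  -- the tail event
  have hcardle : ∀ ω, (g ω).card ≤ S.card := fun ω => Finset.card_le_card (hgS ω)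
  have hunion2 : A ∩ {ω | f ≤ (g ω).card} =
      ⋃ m ∈ Finset.Icc f S.card, (A ∩ {ω | (g ω).card = m}) := by
    ext ω
    simp only [Set.mem_inter_iff, Set.mem_setOf_eq, Set.mem_iUnion, exists_prop]
    constructor
    · rintro ⟨hω, hf⟩
      exact ⟨(g ω).card, Finset.mem_Icc.2 ⟨hf, hcardle ω⟩, hω, rfl⟩
    · rintro ⟨m, hm, hω, hc⟩
      exact ⟨hω, hc ▸ (Finset.mem_Icc.1 hm).1⟩
  have hdisj2 : (↑(Finset.Icc f S.card) : Set ℕ).PairwiseDisjoint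
      (fun m => A ∩ {ω | (g ω).card = m}) := by
    intro m _ m' _ hne
    refine Set.disjoint_left.2 fun ω h1 h2 => hne ?_
    exact h1.2.symm.trans h2.2
  have hEfin : μ (A ∩ {ω | f ≤ (g ω).card}) =
      p * (∑ m ∈ Finset.Icc f (s - 1),
        ((s - 1).choose m : ℝ≥0∞) * p ^ m * (1 - p) ^ (s - 1 - m)) := by
    rw [hunion2, measure_biUnion_finset hdisj2 (fun m _ => hmeasm m), Finset.mul_sum, hScard]
    refine Finset.sum_congr rfl fun m _ => ?_
    rw [hmum m, hScard]; ring
  -- identify the W event intersected with A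
  have hWev : {ω | W j ω = 1} =
      {ω | f ≤ (Finset.univ.filter fun i => i ≠ j ∧ X i ω = X j ω).card} := by
    ext ω
    simp only [Set.mem_setOf_eq, hW j ω]
    by_cases h : f ≤ (Finset.univ.filter fun i => i ≠ j ∧ X i ω = X j ω).card <;> simp [h]
  have hint : {ω | W j ω = 1} ∩ A = A ∩ {ω | f ≤ (g ω).card} := by
    ext ω
    simp only [hWev, Set.mem_inter_iff, Set.mem_setOf_eq, hA, hgdef]
    constructor
    · rintro ⟨hf, hc⟩
      refine ⟨hc, ?_⟩
      simpa only [hc] using hf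
    · rintro ⟨hc, hf⟩
      refine ⟨?_, hc⟩
      simpa only [hc] using hf
  constructor
  · calc p * (∑ m ∈ Finset.Icc f (s - 1),
          ((s - 1).choose m : ℝ≥0∞) * p ^ m * (1 - p) ^ (s - 1 - m))
        = μ (A ∩ {ω | f ≤ (g ω).card}) := hEfin.symm
      _ = μ ({ω | W j ω = 1} ∩ A) := by rw [hint]
      _ ≤ μ {ω | W j ω = 1} := measure_mono Set.inter_subset_left
  · calc μ {ω | W j ω = 1}
        ≤ μ (({ω | W j ω = 1} ∩ A) ∪ Aᶜ) := by
          refine measure_mono fun ω hω => ?_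
          by_cases h : ω ∈ A
          · exact Or.inl ⟨hω, h⟩
          · exact Or.inr h
      _ ≤ μ ({ω | W j ω = 1} ∩ A) + μ Aᶜ := measure_union_le _ _
      _ = p * (∑ m ∈ Finset.Icc f (s - 1),
            ((s - 1).choose m : ℝ≥0∞) * p ^ m * (1 - p) ^ (s - 1 - m)) + (1 - p) := by
          rw [hint, hEfin, prob_compl_eq_one_sub hAmeas, hApr]
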